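/- Let R be a ℂ-algebra which is a domain, and let Γ be a finite group acting on R by ℂ-algebra automorphisms such that the fixed ring R^Γ is a simple ring. Then R is a simple ring. -/

import Mathlib

set_option linter.unusedSectionVars false
set_option maxHeartbeats 1000000

noncomputable section

namespace Statement4Aux

open Finset

variable {Γ : Type*} [Group Γ]

def mask {k : ℕ} (i j : ℕ) (γ : Γ) (w : Fin k → Γ) : Fin k → Γ :=
  fun t => if i ≤ (t : ℕ) ∧ (t : ℕ) < j then γ * w t else w t

def shiftE {k : ℕ} (j : ℕ) (γ : Γ) : (Fin k → Γ) ≃ (Fin k → Γ) where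
  toFun w t := if (t : ℕ) < j then γ * w t else w t
  invFun w t := if (t : ℕ) < j then γ⁻¹ * w t else w t
  left_inv w := by funext t; by_cases h : (t : ℕ) < j <;> simp [h]
  right_inv w := by funext t; by_cases h : (t : ℕ) < j <;> simp [h]

lemma mask_self {k : ℕ} (i : ℕ) (γ : Γ) (w : Fin k → Γ) : mask i i γ w = w := by
  funext t; exact if_neg (by omega)

lemma shiftE_one {k : ℕ} (j : ℕ) (w : Fin k → Γ) : shiftE j (1 : Γ) w = w := by
  funext t; simp [shiftE]

lemma mask_shiftE {k : ℕ} {i j : ℕ} (hij : i ≤ j) (γ : Γ) (w : Fin k → Γ) :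
    mask i j γ (shiftE i γ w) = shiftE j γ w := by
  funext t
  simp only [mask, shiftE, Equiv.coe_fn_mk]
  rcases lt_or_ge (t : ℕ) i with h | h
  · have hj : (t : ℕ) < j := lt_of_lt_of_le h hij
    simp [h, hj, (by omega : ¬ (i ≤ (t : ℕ)))]
  · by_cases hj : (t : ℕ) < j
    · simp [h, hj, (by omega : ¬ ((t : ℕ) < i))]
    · simp [h, hj, (by omega : ¬ ((t : ℕ) < i)), (by omega : ¬ (i ≤ (t:ℕ) ∧ (t:ℕ) < j))]

variable [Fintype Γ] [DecidableEq Γ]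

def winVec (k : ℕ) (i j : ℕ) (w : Fin k → Γ) : (Fin k → Γ) → ℂ :=
  ∑ γ : Γ, Pi.single (mask i j γ w) (1 : ℂ)

def winSpan (k : ℕ) : Submodule ℂ ((Fin k → Γ) → ℂ) :=
  Submodule.span ℂ {f | ∃ i j : ℕ, ∃ w : Fin k → Γ, i < j ∧ j ≤ k ∧ f = winVec k i j w}

def ip {k : ℕ} (f g : (Fin k → Γ) → ℂ) : ℂ :=
  ∑ v : Fin k → Γ, (starRingEnd ℂ) (f v) * g v

lemma ip_sum_left {k : ℕ} {A : Type*} (s : Finset A) (f : A → ((Fin k → Γ) → ℂ))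
    (g : (Fin k → Γ) → ℂ) : ip (∑ a ∈ s, f a) g = ∑ a ∈ s, ip (f a) g := by
  unfold ip
  rw [Finset.sum_comm]
  refine Finset.sum_congr rfl fun v _ => ?_
  rw [Finset.sum_apply, map_sum, Finset.sum_mul]

lemma ip_sum_right {k : ℕ} {A : Type*} (s : Finset A) (f : A → ((Fin k → Γ) → ℂ))
    (g : (Fin k → Γ) → ℂ) : ip g (∑ a ∈ s, f a) = ∑ a ∈ s, ip g (f a) := by
  unfold ip
  rw [Finset.sum_comm]
  refine Finset.sum_congr rfl fun v _ => ?_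
  rw [Finset.sum_apply, Finset.mul_sum]

lemma ip_conj {k : ℕ} (f g : (Fin k → Γ) → ℂ) : ip f g = (starRingEnd ℂ) (ip g f) := by
  unfold ip
  rw [map_sum]
  refine Finset.sum_congr rfl fun v _ => ?_
  rw [map_mul, Complex.conj_conj, mul_comm]

lemma ip_self {k : ℕ} (f : (Fin k → Γ) → ℂ) :
    ip f f = ((∑ v : Fin k → Γ, Complex.normSq (f v) : ℝ) : ℂ) := by
  unfold ip
  push_cast
  refine Finset.sum_congr rfl fun v _ => ?_
  rw [mul_comm, Complex.mul_conj]

lemma ip_smul {k : ℕ} (c : ℂ) (f g : (Fin k → Γ) → ℂ) :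
    ip (c • f) (c • g) = (starRingEnd ℂ) c * c * ip f g := by
  unfold ip
  rw [Finset.mul_sum]
  refine Finset.sum_congr rfl fun v _ => ?_
  simp only [Pi.smul_apply, smul_eq_mul, map_mul]
  ring

lemma winSpan_eq_top {k : ℕ} (hk : Fintype.card Γ < k + 1) :
    winSpan (Γ := Γ) k = ⊤ := by
  by_contra hne
  set U := winSpan (Γ := Γ) k with hU
  have hlt : U < ⊤ := lt_of_le_of_ne le_top hne
  haveI : Nontrivial (((Fin k → Γ) → ℂ) ⧸ U) := (Submodule.Quotient.nontrivial_iff (p := U)).2 hlt.ne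
  set B := Module.Basis.ofVectorSpace ℂ (((Fin k → Γ) → ℂ) ⧸ U) with hB
  obtain ⟨i0⟩ : Nonempty _ := B.index_nonempty
  set L : ((Fin k → Γ) → ℂ) →ₗ[ℂ] ℂ := (B.coord i0).comp U.mkQ with hL
  have hLU : ∀ u ∈ U, L u = 0 := by
    intro u hu
    have h0 : U.mkQ u = 0 := (Submodule.Quotient.mk_eq_zero U).2 hu
    rw [hL, LinearMap.comp_apply, h0, map_zero]
  have hL1 : ∃ ψ, L ψ = 1 := by
    obtain ⟨ψ, hψ⟩ := Submodule.mkQ_surjective U (B i0)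
    refine ⟨ψ, ?_⟩
    rw [hL, LinearMap.comp_apply, hψ, Module.Basis.coord_apply, Module.Basis.repr_self,
      Finsupp.single_eq_same]
  set φ : (Fin k → Γ) → ℂ := fun w => (starRingEnd ℂ) (L (Pi.single w 1)) with hφ
  have hcond : ∀ i j : ℕ, i < j → j ≤ k → ∀ w : Fin k → Γ,
      ∑ γ : Γ, φ (mask i j γ w) = 0 := by
    intro i j hij hjk w
    have h0 : L (winVec k i j w) = 0 :=
      hLU _ (Submodule.subset_span ⟨i, j, w, hij, hjk, rfl⟩)
    have h1 : ∑ γ : Γ, φ (mask i j γ w) = (starRingEnd ℂ) (L (winVec k i j w)) := by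
      rw [winVec, map_sum, map_sum]
    rw [h1, h0, map_zero]
  set V : ℕ → Γ → ((Fin k → Γ) → ℂ) := fun j γ => (fun w => φ (shiftE j γ w)) with hV
  have key1 : ∀ (i j : ℕ), i ≤ j → ∀ γ : Γ,
      ip (V i γ) (V j γ) = ∑ u : Fin k → Γ, (starRingEnd ℂ) (φ u) * φ (mask i j γ u) := by
    intro i j hij γ
    unfold ip
    have hterm : ∀ w : Fin k → Γ, (starRingEnd ℂ) ((V i γ) w) * (V j γ) w
        = (fun u => (starRingEnd ℂ) (φ u) * φ (mask i j γ u)) (shiftE i γ w) := by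
      intro w
      simp only [hV]
      rw [mask_shiftE hij]
    rw [Finset.sum_congr rfl fun w _ => hterm w]
    exact Equiv.sum_comp (shiftE i γ)
      (fun u => (starRingEnd ℂ) (φ u) * φ (mask i j γ u))
  have key_off : ∀ (i j : ℕ), i < j → j ≤ k →
      ∑ γ : Γ, ip (V i γ) (V j γ) = 0 := by
    intro i j hij hjk
    rw [Finset.sum_congr rfl fun γ _ => key1 i j (le_of_lt hij) γ, Finset.sum_comm]
    refine Finset.sum_eq_zero fun u _ => ?_
    rw [← Finset.mul_sum, hcond i j hij hjk u, mul_zero]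
  have key_diag : ∀ i : ℕ,
      ∑ γ : Γ, ip (V i γ) (V i γ) = (Fintype.card Γ : ℂ) * ip φ φ := by
    intro i
    rw [Finset.sum_congr rfl fun γ _ => key1 i i le_rfl γ]
    have h2 : ∀ γ : Γ, γ ∈ (univ : Finset Γ) →
        (∑ u : Fin k → Γ, (starRingEnd ℂ) (φ u) * φ (mask i i γ u)) = ip φ φ := by
      intro γ _
      unfold ip
      refine Finset.sum_congr rfl fun u _ => ?_
      rw [mask_self]
    rw [Finset.sum_congr rfl h2, Finset.sum_const, Finset.card_univ, nsmul_eq_mul]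
  set F : Γ → ((Fin k → Γ) → ℂ) := fun γ => ∑ j ∈ Finset.range (k+1), V j γ with hF
  have hFF : ∀ γ : Γ, ip (F γ) (F γ)
      = ∑ i ∈ Finset.range (k+1), ∑ j ∈ Finset.range (k+1), ip (V i γ) (V j γ) := by
    intro γ
    rw [hF, ip_sum_left]
    exact Finset.sum_congr rfl fun i _ => ip_sum_right _ _ _
  have hS : ∀ i ∈ Finset.range (k+1), ∀ j ∈ Finset.range (k+1),
      ∑ γ : Γ, ip (V i γ) (V j γ)
        = if i = j then (Fintype.card Γ : ℂ) * ip φ φ else 0 := by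
    intro i hi j hj
    rcases lt_trichotomy i j with h | h | h
    · rw [if_neg h.ne]
      exact key_off i j h (Nat.lt_succ_iff.mp (Finset.mem_range.mp hj))
    · subst h
      rw [if_pos rfl]
      exact key_diag i
    · rw [if_neg (by omega : ¬ i = j)]
      have hconj : ∑ γ : Γ, ip (V i γ) (V j γ)
          = (starRingEnd ℂ) (∑ γ : Γ, ip (V j γ) (V i γ)) := by
        rw [map_sum]
        exact Finset.sum_congr rfl fun γ _ => ip_conj _ _
      rw [hconj, key_off j i h (Nat.lt_succ_iff.mp (Finset.mem_range.mp hi)), map_zero]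
  have hT : ∑ γ : Γ, ip (F γ) (F γ)
      = ((k+1 : ℕ) : ℂ) * ((Fintype.card Γ : ℂ) * ip φ φ) := by
    rw [Finset.sum_congr rfl fun γ _ => hFF γ]
    rw [Finset.sum_comm]
    have swap2 : ∀ i ∈ Finset.range (k+1),
        ∑ γ : Γ, ∑ j ∈ Finset.range (k+1), ip (V i γ) (V j γ)
          = ∑ j ∈ Finset.range (k+1), ∑ γ : Γ, ip (V i γ) (V j γ) :=
      fun i _ => Finset.sum_comm
    rw [Finset.sum_congr rfl swap2]
    have heval : ∀ i ∈ Finset.range (k+1),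
        ∑ j ∈ Finset.range (k+1), ∑ γ : Γ, ip (V i γ) (V j γ)
          = (Fintype.card Γ : ℂ) * ip φ φ := by
      intro i hi
      rw [Finset.sum_congr rfl (hS i hi)]
      rw [Finset.sum_ite_eq (Finset.range (k+1)) i
        (fun _ => (Fintype.card Γ : ℂ) * ip φ φ), if_pos hi]
    rw [Finset.sum_congr rfl heval, Finset.sum_const, Finset.card_range, nsmul_eq_mul]
  set n := Fintype.card Γ with hn
  set Q : ℝ := ∑ v : Fin k → Γ, Complex.normSq (φ v) with hQdef
  have hφφ : ip φ φ = (Q : ℂ) := ip_self φ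
  have hQ0 : 0 ≤ Q := Finset.sum_nonneg fun v _ => Complex.normSq_nonneg _
  have hTre : (∑ γ : Γ, ip (F γ) (F γ)).re = ((k+1) * n * Q : ℝ) := by
    rw [hT, hφφ]
    have hcast : ((k+1 : ℕ) : ℂ) * ((n : ℂ) * (Q : ℂ)) = (((k+1) * n * Q : ℝ) : ℂ) := by
      push_cast; ring
    rw [hcast, Complex.ofReal_re]
  have hF1 : F 1 = ((k+1 : ℕ) : ℂ) • φ := by
    funext w
    rw [hF]
    simp only [Finset.sum_apply, Pi.smul_apply, smul_eq_mul]
    have hone : ∀ j ∈ Finset.range (k+1), V j (1:Γ) w = φ w := by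
      intro j _
      simp only [hV]
      rw [shiftE_one]
    rw [Finset.sum_congr rfl hone, Finset.sum_const, Finset.card_range, nsmul_eq_mul]
  have hF1re : (ip (F 1) (F 1)).re = (((k+1) * (k+1) * Q : ℝ)) := by
    rw [hF1, ip_smul, hφφ]
    have hc : (starRingEnd ℂ) ((k+1 : ℕ) : ℂ) = ((k+1:ℕ) : ℂ) := by simp
    rw [hc]
    have hcast : ((k+1 : ℕ) : ℂ) * ((k+1:ℕ) : ℂ) * (Q : ℂ) = (((k+1) * (k+1) * Q : ℝ) : ℂ) := by
      push_cast; ring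
    rw [hcast, Complex.ofReal_re]
  have hle : (ip (F 1) (F 1)).re ≤ (∑ γ : Γ, ip (F γ) (F γ)).re := by
    rw [Complex.re_sum]
    refine Finset.single_le_sum (f := fun γ => (ip (F γ) (F γ)).re)
      (fun γ _ => ?_) (Finset.mem_univ 1)
    show 0 ≤ (ip (F γ) (F γ)).re
    rw [ip_self, Complex.ofReal_re]
    exact Finset.sum_nonneg fun v _ => Complex.normSq_nonneg _
  rw [hF1re, hTre] at hle
  have hnk : (n : ℝ) < (k : ℝ) + 1 := by exact_mod_cast hk
  have hQ : Q = 0 := by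
    by_contra hQne
    have hQpos : 0 < Q := lt_of_le_of_ne hQ0 (Ne.symm hQne)
    have hkpos : (0:ℝ) < (k:ℝ) + 1 := by positivity
    have hmul := mul_lt_mul_of_pos_right (mul_lt_mul_of_pos_left hnk hkpos) hQpos
    linarith
  have hφ0 : ∀ v, φ v = 0 := by
    intro v
    have hall := (Finset.sum_eq_zero_iff_of_nonneg
      (fun v (_ : v ∈ (Finset.univ : Finset (Fin k → Γ))) => Complex.normSq_nonneg (φ v))).1
      (by rw [← hQdef, hQ])
    exact Complex.normSq_eq_zero.1 (hall v (Finset.mem_univ v))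
  obtain ⟨ψ, hψ1⟩ := hL1
  have hLs : ∀ w, L (Pi.single w (1:ℂ)) = 0 := by
    intro w
    have h1 : (starRingEnd ℂ) (L (Pi.single w 1)) = 0 := hφ0 w
    have h2 := congrArg (starRingEnd ℂ) h1
    rwa [Complex.conj_conj, map_zero] at h2
  have hexp : ∀ ψ' : (Fin k → Γ) → ℂ,
      L ψ' = ∑ w : Fin k → Γ, ψ' w * L (Pi.single w (1:ℂ)) := by
    intro ψ'
    conv_lhs => rw [← Finset.univ_sum_single ψ']
    rw [map_sum]
    refine Finset.sum_congr rfl fun w _ => ?_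
    have hsingle : (Pi.single w (ψ' w) : (Fin k → Γ) → ℂ) = ψ' w • (Pi.single w (1:ℂ) : (Fin k → Γ) → ℂ) := by
      funext v
      by_cases hv : v = w <;> simp [Pi.single_apply, hv]
    rw [hsingle, map_smul, smul_eq_mul]
  rw [hexp ψ] at hψ1
  simp only [hLs, mul_zero, Finset.sum_const_zero] at hψ1
  exact one_ne_zero hψ1.symm

section Eval

variable {R : Type*} [Ring R] [Algebra ℂ R] (act : Γ →* (R ≃ₐ[ℂ] R))

/-- The ordered product `act (v 0) x * act (v 1) x * ⋯`. -/
def wordProd (x : R) {k : ℕ} (v : Fin k → Γ) : R :=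
  ((List.finRange k).map fun t => act (v t) x).prod

def evMap (x : R) (k : ℕ) : ((Fin k → Γ) → ℂ) →ₗ[ℂ] R where
  toFun φ := ∑ v : Fin k → Γ, φ v • wordProd act x v
  map_add' φ ψ := by
    simp only [Pi.add_apply, add_smul, Finset.sum_add_distrib]
  map_smul' c φ := by
    simp only [Pi.smul_apply, smul_eq_mul, RingHom.id_apply, Finset.smul_sum, smul_smul]

lemma evMap_single (x : R) (k : ℕ) (w : Fin k → Γ) :
    evMap act x k (Pi.single w (1:ℂ)) = wordProd act x w := by
  simp only [evMap, LinearMap.coe_mk, AddHom.coe_mk]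
  rw [Finset.sum_eq_single w]
  · rw [Pi.single_eq_same, one_smul]
  · intro v _ hv
    rw [Pi.single_eq_of_ne hv, zero_smul]
  · intro hw; exact absurd (Finset.mem_univ w) hw

lemma mem_take_finRange {k i : ℕ} {t : Fin k} (h : t ∈ (List.finRange k).take i) :
    (t : ℕ) < i := by
  rw [List.mem_iff_getElem] at h
  obtain ⟨m, hm, hEq⟩ := h
  have hm' : m < i := by
    have h2 := hm
    rw [List.length_take, List.length_finRange] at h2
    omega
  rw [List.getElem_take, List.getElem_finRange] at hEq
  have : (t : ℕ) = m := by rw [← hEq]; simp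
  omega

lemma mem_drop_finRange {k j : ℕ} {t : Fin k} (h : t ∈ (List.finRange k).drop j) :
    j ≤ (t : ℕ) := by
  rw [List.mem_iff_getElem] at h
  obtain ⟨m, hm, hEq⟩ := h
  rw [List.getElem_drop, List.getElem_finRange] at hEq
  have : (t : ℕ) = j + m := by rw [← hEq]; simp
  omega

lemma mem_mid_finRange {k i j : ℕ} (hij : i ≤ j) {t : Fin k}
    (h : t ∈ ((List.finRange k).drop i).take (j - i)) :
    i ≤ (t : ℕ) ∧ (t : ℕ) < j := by
  rw [List.mem_iff_getElem] at h
  obtain ⟨m, hm, hEq⟩ := h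
  have hm' : m < j - i := by
    have h2 := hm
    rw [List.length_take, List.length_drop, List.length_finRange] at h2
    omega
  rw [List.getElem_take, List.getElem_drop, List.getElem_finRange] at hEq
  have : (t : ℕ) = i + m := by rw [← hEq]; simp
  omega

lemma prod_split {M : Type*} [Monoid M] (k i j : ℕ) (hij : i ≤ j) (f : Fin k → M) :
    ((List.finRange k).map f).prod
      = (((List.finRange k).take i).map f).prod
        * ((((List.finRange k).drop i).take (j - i)).map f).prod
        * (((List.finRange k).drop j).map f).prod := by
  have hdrop : (List.finRange k).drop i
      = ((List.finRange k).drop i).take (j - i) ++ (List.finRange k).drop j := by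
    have h1 := List.take_append_drop (j - i) ((List.finRange k).drop i)
    rw [List.drop_drop] at h1
    rw [show i + (j - i) = j from by omega] at h1
    exact h1.symm
  conv_lhs => rw [← List.take_append_drop i (List.finRange k), hdrop]
  rw [List.map_append, List.map_append, List.prod_append, List.prod_append, mul_assoc]

lemma wordProd_mask (x : R) {k i j : ℕ} (hij : i < j) (hjk : j ≤ k)
    (γ : Γ) (w : Fin k → Γ) :
    wordProd act x (mask i j γ w)
      = (((List.finRange k).take i).map fun t => act (w t) x).prod
        * act γ (((((List.finRange k).drop i).take (j - i)).map fun t => act (w t) x).prod)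
        * (((List.finRange k).drop j).map fun t => act (w t) x).prod := by
  unfold wordProd
  rw [prod_split k i j (le_of_lt hij)]
  congr 1
  · congr 1
    · -- take part
      refine congrArg List.prod (List.map_congr_left fun t ht => ?_)
      have hlt := mem_take_finRange ht
      have : mask i j γ w t = w t := if_neg (by omega)
      rw [this]
    · -- middle part
      rw [map_list_prod (act γ), List.map_map]
      refine congrArg List.prod (List.map_congr_left fun t ht => ?_)
      obtain ⟨h1, h2⟩ := mem_mid_finRange (le_of_lt hij) ht
      have hmask : mask i j γ w t = γ * w t := if_pos ⟨h1, h2⟩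
      rw [hmask, map_mul act, AlgEquiv.mul_apply]
      rfl
  · -- drop part
    refine congrArg List.prod (List.map_congr_left fun t ht => ?_)
    have hge := mem_drop_finRange ht
    have : mask i j γ w t = w t := if_neg (by omega)
    rw [this]

lemma listProd_mem_S (S : Set R) (hmulr : ∀ s ∈ S, ∀ r : R, s * r ∈ S) :
    ∀ L : List R, (∀ a ∈ L, a ∈ S) → L ≠ [] → L.prod ∈ S := by
  intro L hL hne
  match L with
  | [] => exact absurd rfl hne
  | a :: L' =>
    rw [List.prod_cons]
    exact hmulr a (hL a (by simp)) _

lemma evMap_winVec (S : Set R)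
    (hstab : ∀ (γ : Γ) (s : R), s ∈ S → act γ s ∈ S)
    (hmulr : ∀ s ∈ S, ∀ r : R, s * r ∈ S)
    (htr : ∀ s ∈ S, ∑ γ : Γ, act γ s = 0)
    (x : R) (hx : x ∈ S) {k i j : ℕ} (hij : i < j) (hjk : j ≤ k) (w : Fin k → Γ) :
    evMap act x k (winVec k i j w) = 0 := by
  rw [winVec, map_sum]
  rw [Finset.sum_congr rfl fun γ _ => by
    rw [evMap_single, wordProd_mask act x hij hjk γ w]]
  rw [← Finset.sum_mul, ← Finset.mul_sum]
  have hB : (((((List.finRange k).drop i).take (j - i)).map fun t => act (w t) x).prod) ∈ S := by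
    refine listProd_mem_S S hmulr _ (fun a ha => ?_) ?_
    · rw [List.mem_map] at ha
      obtain ⟨t, _, rfl⟩ := ha
      exact hstab _ _ hx
    · rw [Ne, List.map_eq_nil_iff]
      intro hnil
      have := congrArg List.length hnil
      rw [List.length_take, List.length_drop, List.length_finRange] at this
      simp at this
      omega
  rw [htr _ hB, mul_zero, zero_mul]

lemma core_pow_eq_zero (S : Set R)
    (hstab : ∀ (γ : Γ) (s : R), s ∈ S → act γ s ∈ S)
    (hmulr : ∀ s ∈ S, ∀ r : R, s * r ∈ S)
    (htr : ∀ s ∈ S, ∑ γ : Γ, act γ s = 0)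
    (x : R) (hx : x ∈ S) :
    x ^ (Fintype.card Γ) = 0 := by
  set k := Fintype.card Γ with hk
  have hspan : winSpan (Γ := Γ) k = ⊤ := winSpan_eq_top (by omega)
  have hker : winSpan (Γ := Γ) k ≤ LinearMap.ker (evMap act x k) := by
    rw [winSpan, Submodule.span_le]
    rintro f ⟨i, j, w, hij, hjk, rfl⟩
    exact LinearMap.mem_ker.2 (evMap_winVec act S hstab hmulr htr x hx hij hjk w)
  have h0 : evMap act x k (Pi.single (fun _ => (1:Γ)) (1:ℂ)) = 0 :=
    LinearMap.mem_ker.1 (hker (hspan ▸ Submodule.mem_top))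
  rw [evMap_single] at h0
  have hword : wordProd act x (fun _ : Fin k => (1:Γ)) = x ^ k := by
    unfold wordProd
    have hfun : ((List.finRange k).map fun t => act ((fun _ : Fin k => (1:Γ)) t) x)
        = List.replicate k x := by
      have h1 : (fun t : Fin k => act ((fun _ : Fin k => (1:Γ)) t) x)
          = fun _ : Fin k => x := by
        funext t
        rw [map_one act, AlgEquiv.one_apply]
      rw [h1, List.map_const', List.length_finRange]
    rw [hfun, List.prod_replicate]
  rw [hword] at h0
  exact h0

end Eval

end Statement4Aux

/-- The fixed subalgebra of a group acting on a `k`-algebra by `k`-algebra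
automorphisms. -/
def fixedSubalgebra {k R Γ : Type*} [CommSemiring k] [Semiring R] [Algebra k R]
    [Monoid Γ] (act : Γ →* (R ≃ₐ[k] R)) : Subalgebra k R where
  carrier := {x | ∀ g : Γ, act g x = x}
  mul_mem' {x y} hx hy g := by simp [map_mul, hx g, hy g]
  add_mem' {x y} hx hy g := by simp [map_add, hx g, hy g]
  algebraMap_mem' c g := by simp

/-- if `R` is a `ℂ`-domain and a finite group `Γ` acts on `R` by
`ℂ`-algebra automorphisms so that the fixed ring `R^Γ` is a simple ring, then
`R` itself is a simple ring. -/
theorem isSimpleRing_of_fixed_isSimpleRing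
    (R : Type*) [Ring R] [IsDomain R] [Algebra ℂ R]
    (Γ : Type*) [Group Γ] [Finite Γ]
    (act : Γ →* (R ≃ₐ[ℂ] R))
    (hsimple : IsSimpleRing ↥(fixedSubalgebra act)) :
    IsSimpleRing R := by
  letI : Fintype Γ := Fintype.ofFinite Γ
  letI : DecidableEq Γ := Classical.decEq Γ
  haveI : Nontrivial (TwoSidedIdeal R) := by
    refine ⟨⊥, ⊤, fun h => ?_⟩
    have h1 : (1:R) ∈ (⊥ : TwoSidedIdeal R) := h ▸ TwoSidedIdeal.mem_top _
    exact one_ne_zero ((TwoSidedIdeal.mem_bot _).1 h1)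
  constructor
  refine ⟨fun I => ?_⟩
  by_cases hI : I = ⊥
  · left; exact hI
  right
  obtain ⟨a, haI, ha0⟩ : ∃ a, a ∈ I ∧ a ≠ 0 := by
    by_contra h
    push_neg at h
    apply hI
    refine SetLike.ext fun x => ?_
    rw [TwoSidedIdeal.mem_bot _]
    exact ⟨fun hx => h x hx, fun hx => hx ▸ TwoSidedIdeal.zero_mem I⟩
  set Kset : Set R := {y | ∀ δ : Γ, act δ y ∈ I} with hKsetdef
  have hstab : ∀ (γ : Γ) (s : R), s ∈ Kset → act γ s ∈ Kset := by
    intro γ s hs δ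
    rw [← AlgEquiv.mul_apply, ← map_mul act]
    exact hs (δ * γ)
  have hmulr : ∀ s ∈ Kset, ∀ r : R, s * r ∈ Kset := by
    intro s hs r δ
    rw [map_mul]
    exact I.mul_mem_right _ _ (hs δ)
  -- the nonzero element of Kset
  set p : R := ((Finset.univ : Finset Γ).toList.map fun γ => act γ a).prod with hpdef
  have hp0 : p ≠ 0 := by
    rw [hpdef]
    apply List.prod_ne_zero
    intro h0
    rw [List.mem_map] at h0
    obtain ⟨γ, _, hγ⟩ := h0
    apply ha0
    have h00 : act γ a = act γ 0 := by rw [hγ, map_zero]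
    exact (act γ).injective h00
  have hpK : p ∈ Kset := by
    intro δ
    have hδp : act δ p = ((Finset.univ : Finset Γ).toList.map
        fun γ => act δ (act γ a)).prod := by
      rw [hpdef, map_list_prod (act δ), List.map_map]
      rfl
    rw [hδp]
    refine I.listProd_mem _ _ ⟨δ⁻¹, by simp [Finset.mem_toList], ?_⟩
    show act δ (act δ⁻¹ a) ∈ I
    rw [← AlgEquiv.mul_apply, ← map_mul act, mul_inv_cancel, map_one]
    simpa using haI
  -- the induced ideal in the fixed subalgebra
  set J : TwoSidedIdeal ↥(fixedSubalgebra act) :=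
    TwoSidedIdeal.mk' {z : ↥(fixedSubalgebra act) | (z : R) ∈ Kset}
      (by intro δ; simp only [ZeroMemClass.coe_zero, map_zero]; exact TwoSidedIdeal.zero_mem I)
      (by intro x y hx hy δ
          simp only [AddMemClass.coe_add, map_add]
          exact TwoSidedIdeal.add_mem I (hx δ) (hy δ))
      (by intro x hx δ
          simp only [NegMemClass.coe_neg, map_neg]
          exact TwoSidedIdeal.neg_mem I (hx δ))
      (by intro x y hy δ
          simp only [MulMemClass.coe_mul, map_mul]
          exact I.mul_mem_left _ _ (hy δ))
      (by intro x y hx δ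
          simp only [MulMemClass.coe_mul, map_mul]
          exact I.mul_mem_right _ _ (hx δ)) with hJdef
  obtain hJ | hJ := hsimple.simple.eq_bot_or_eq_top J
  · -- trace vanishes on Kset; contradiction with the core lemma
    exfalso
    have htr : ∀ s ∈ Kset, ∑ γ : Γ, act γ s = 0 := by
      intro s hs
      set T : R := ∑ γ : Γ, act γ s with hTdef
      have hTfix : ∀ δ : Γ, act δ T = T := by
        intro δ
        rw [hTdef, map_sum]
        refine Fintype.sum_equiv (Equiv.mulLeft δ) _ _ fun γ => ?_
        rw [← AlgEquiv.mul_apply, ← map_mul act]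
        rfl
      have hTmem : T ∈ fixedSubalgebra act := hTfix
      have hTK : T ∈ Kset := by
        intro δ
        rw [hTdef, map_sum]
        refine TwoSidedIdeal.finsetSum_mem I _ _ fun γ _ => ?_
        rw [← AlgEquiv.mul_apply, ← map_mul act]
        exact hs (δ * γ)
      have hTJ : (⟨T, hTmem⟩ : ↥(fixedSubalgebra act)) ∈ J := by
        rw [hJdef, TwoSidedIdeal.mem_mk']
        exact hTK
      rw [hJ, TwoSidedIdeal.mem_bot _] at hTJ
      have := congrArg (Subtype.val) hTJ
      simpa using this
    have hpow := Statement4Aux.core_pow_eq_zero act Kset hstab hmulr htr p hpK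
    exact hp0 ((pow_eq_zero_iff Fintype.card_ne_zero).1 hpow)
  · -- 1 ∈ J, hence 1 ∈ I
    have h1J : (1 : ↥(fixedSubalgebra act)) ∈ J := hJ ▸ TwoSidedIdeal.mem_top _
    rw [hJdef, TwoSidedIdeal.mem_mk'] at h1J
    have h1K : (1 : R) ∈ Kset := by simpa using h1J
    have h1I : (1 : R) ∈ I := by
      have := h1K (1 : Γ)
      rwa [map_one] at this
    exact TwoSidedIdeal.eq_top I h1I
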